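/- Let R be a ring and e ∈ R an idempotent with ReR = R, and suppose I is a two-sided ideal of R with a countable approximate unit of idempotents. Then for every x ∈ I, x lies in the set IeI of finite sums of elements of the forms ea, be, and a·e·b with a, b ∈ I; in particular IeI = I. -/

import Mathlib

/-- If `e` is an idempotent with `ReR = R` and `I` is a two-sided ideal with a countable
approximate unit of idempotents, then every `x ∈ I` is a finite sum of elements of the forms
`e*a`, `b*e`, `a*e*b` with `a, b ∈ I`; in particular `IeI = I`. -/
theorem stmt7 {R : Type*} [NonUnitalRing R] (e : R) (he : e * e = e)
    (hfull : ∀ x : R, x ∈ AddSubgroup.closure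
      {y : R | (∃ r, y = e * r) ∨ (∃ r, y = r * e) ∨ (∃ r₁ r₂, y = r₁ * e * r₂)})
    (I : TwoSidedIdeal R)
    (u : ℕ → R) (humem : ∀ n, u n ∈ I) (huid : ∀ n, u n * u n = u n)
    (huchain : ∀ n, u (n + 1) * u n = u n ∧ u n * u (n + 1) = u n)
    (huabs : ∀ x ∈ I, ∃ n, u n * x = x ∧ x * u n = x) :
    (∀ x ∈ I, x ∈ AddSubgroup.closure
      {y : R | (∃ a ∈ I, y = e * a) ∨ (∃ b ∈ I, y = b * e) ∨ (∃ a ∈ I, ∃ b ∈ I, y = a * e * b)}) ∧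
    (AddSubgroup.closure
      {y : R | (∃ a ∈ I, y = e * a) ∨ (∃ b ∈ I, y = b * e) ∨ (∃ a ∈ I, ∃ b ∈ I, y = a * e * b)}
        : Set R) = (I : Set R) := by

  have hmain : ∀ x ∈ I, x ∈ AddSubgroup.closure
      {y : R | (∃ a ∈ I, y = e * a) ∨ (∃ b ∈ I, y = b * e) ∨ (∃ a ∈ I, ∃ b ∈ I, y = a * e * b)} := by
    intro x hx
    obtain ⟨n, h1, h2⟩ := huabs x hx
    have hv := humem n
    have key : ∀ y ∈ AddSubgroup.closure
        {y : R | (∃ r, y = e * r) ∨ (∃ r, y = r * e) ∨ (∃ r₁ r₂, y = r₁ * e * r₂)},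
        u n * y * u n ∈ AddSubgroup.closure
          {y : R | (∃ a ∈ I, y = e * a) ∨ (∃ b ∈ I, y = b * e) ∨
            (∃ a ∈ I, ∃ b ∈ I, y = a * e * b)} := by
      intro y hy
      induction hy using AddSubgroup.closure_induction with
      | mem z hz =>
        apply AddSubgroup.subset_closure
        rcases hz with ⟨r, rfl⟩ | ⟨r, rfl⟩ | ⟨r₁, r₂, rfl⟩
        · exact Or.inr (Or.inr ⟨u n, hv, r * u n, I.mul_mem_left _ _ hv, by noncomm_ring⟩)
        · exact Or.inr (Or.inr ⟨u n * r, I.mul_mem_right _ _ hv, u n, hv, by noncomm_ring⟩)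
        · exact Or.inr (Or.inr ⟨u n * r₁, I.mul_mem_right _ _ hv, r₂ * u n,
            I.mul_mem_left _ _ hv, by noncomm_ring⟩)
      | zero => simpa using AddSubgroup.zero_mem _
      | add a b _ _ ha hb => simpa [mul_add, add_mul] using AddSubgroup.add_mem _ ha hb
      | neg a _ ha => simpa using AddSubgroup.neg_mem _ ha
    have := key x (hfull x)
    rwa [h1, h2] at this
  refine ⟨hmain, Set.Subset.antisymm ?_ hmain⟩
  intro y hy
  induction hy using AddSubgroup.closure_induction with
  | mem z hz =>
    rcases hz with ⟨a, ha, rfl⟩ | ⟨b, hb, rfl⟩ | ⟨a, ha, b, hb, rfl⟩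
    · exact I.mul_mem_left _ _ ha
    · exact I.mul_mem_right _ _ hb
    · exact I.mul_mem_right _ _ (I.mul_mem_right _ _ ha)
  | zero => exact I.zero_mem
  | add a b _ _ ha hb => exact I.add_mem ha hb
  | neg a _ ha => exact I.neg_mem ha
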